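/- arXiv:2108.07992 — 5 statements merged into one kernel-verified Lean document; each statement's English description precedes it below -/
import Mathlib

section
/- Under the assumptions and constructions of the second equivalent form, every minimizer X̄* of ⟨C̄^{(2)}, ·⟩ over Π(r̄_1^{(2)},…,r̄_m^{(2)}) satisfies X̄*_{(n+1, n+1, …, n+1)} = 0; that is, W_{[m]} := Σ_{u ∈ T_{[m]}} X̄*_u = 0. -/
open Finset

noncomputable section

namespace MPOT

/-- The `k`-th marginal of a tensor indexed by `[n]^m` (functions `Fin m → Fin n`). -/
def marg {m n : ℕ} (X : (Fin m → Fin n) → ℝ) (k : Fin m) (j : Fin n) : ℝ :=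
  ∑ v : Fin m → Fin n, if v k = j then X v else 0

/-- Entrywise (Frobenius) inner product of tensors. -/
def dot {m n : ℕ} (C X : (Fin m → Fin n) → ℝ) : ℝ :=
  ∑ v : Fin m → Fin n, C v * X v

/-- The partial transport polytope `Π^s(r_1, …, r_m)`. -/
def PiPartial {m n : ℕ} (r : Fin m → Fin n → ℝ) (s : ℝ) :
    Set ((Fin m → Fin n) → ℝ) :=
  {X | (∀ v, 0 ≤ X v) ∧ (∀ k j, marg X k j ≤ r k j) ∧ ∑ v : Fin m → Fin n, X v = s}

/-- The transport polytope `Π(a_1, …, a_m)` with equality marginal constraints. -/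
def PiEq {m n : ℕ} (a : Fin m → Fin n → ℝ) : Set ((Fin m → Fin n) → ℝ) :=
  {X | (∀ v, 0 ≤ X v) ∧ ∀ k j, marg X k j = a k j}

/-- Embedding of `[n]^m` into `[n+1]^m`. -/
def emb {m n : ℕ} (v : Fin m → Fin n) : Fin m → Fin (n + 1) :=
  fun i => (v i).castSucc

/-- Restriction of a tensor on `[n+1]^m` to the indices in `[n]^m`. -/
def restr {m n : ℕ} (X : (Fin m → Fin (n + 1)) → ℝ) : (Fin m → Fin n) → ℝ :=
  fun v => X (emb v)

/-- The number of coordinates of `u` equal to `n+1` (i.e. `Fin.last n`); `u ∈ T_S`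
with `|S| = nLast u`. -/
def nLast {m n : ℕ} (u : Fin m → Fin (n + 1)) : ℕ :=
  (univ.filter fun ℓ => u ℓ = Fin.last n).card

/-- Extended cost tensor: the original cost on `T_∅ = [n]^m`, and value `A i` on the
`i`-th layer `∪_{|S| = i} T_S`. -/
def extCost {m n : ℕ} (C : (Fin m → Fin n) → ℝ) (A : ℕ → ℝ) :
    (Fin m → Fin (n + 1)) → ℝ :=
  fun u =>
    if h : ∀ i, u i ≠ Fin.last n then C fun i => (u i).castPred (h i)
    else A (nLast u)

/-- Total mass of `X` on the sublayer `T_S`. -/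
def layerSum {m n : ℕ} (X : (Fin m → Fin (n + 1)) → ℝ) (S : Finset (Fin m)) : ℝ :=
  ∑ u : Fin m → Fin (n + 1), if ∀ ℓ, (u ℓ = Fin.last n ↔ ℓ ∈ S) then X u else 0

/-- First-form extended marginals `r̄_k^{(1)} = [r_k, Σ_r/(m−1) − ‖r_k‖₁ − s/(m−1)]`. -/
def extMarg1 {m n : ℕ} (r : Fin m → Fin n → ℝ) (s : ℝ) : Fin m → Fin (n + 1) → ℝ :=
  fun k => Fin.snoc (r k)
    ((∑ i, ∑ j, r i j) / ((m : ℝ) - 1) - (∑ j, r k j) - s / ((m : ℝ) - 1))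

/-- Second-form extended marginals `r̄_k^{(2)} = [r_k, Σ_{i≠k} ‖r_i‖₁ − (m−1)s]`. -/
def extMarg2 {m n : ℕ} (r : Fin m → Fin n → ℝ) (s : ℝ) : Fin m → Fin (n + 1) → ℝ :=
  fun k => Fin.snoc (r k) ((∑ i ∈ univ.erase k, ∑ j, r i j) - ((m : ℝ) - 1) * s)

end MPOT

open MPOT

section Aux
variable {m n : ℕ}

private lemma single_sum' (a : Fin m → Fin n) (c : ℝ) (k : Fin m) (j : Fin n) :
    ∑ v : Fin m → Fin n, (if v k = j then (if v = a then c else 0) else 0)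
      = if a k = j then c else 0 := by
  rw [Finset.sum_eq_single a]
  · simp
  · intro b _ hb; simp [hb]
  · simp

private lemma marg_pert' {ι : Type*} (X : (Fin m → Fin n) → ℝ) (a b : Fin m → Fin n)
    (ca cb : ℝ) (K : Finset ι) (w : ι → (Fin m → Fin n)) (cw : ℝ) (k : Fin m) (j : Fin n) :
    marg (fun v => X v + ((if v = a then ca else 0) + ((if v = b then cb else 0)
        + ∑ x ∈ K, if v = w x then cw else 0))) k j
      = marg X k j + ((if a k = j then ca else 0) + ((if b k = j then cb else 0)
        + ∑ x ∈ K, if w x k = j then cw else 0)) := by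
  unfold marg
  have hsplit : ∀ v : Fin m → Fin n,
      (if v k = j then (X v + ((if v = a then ca else 0) + ((if v = b then cb else 0)
        + ∑ x ∈ K, if v = w x then cw else 0))) else 0)
      = (if v k = j then X v else 0) + ((if v k = j then (if v = a then ca else 0) else 0)
        + ((if v k = j then (if v = b then cb else 0) else 0)
          + ∑ x ∈ K, (if v k = j then (if v = w x then cw else 0) else 0))) := by
    intro v; by_cases h : v k = j <;> simp [h]
  rw [Finset.sum_congr rfl (fun v _ => hsplit v)]
  rw [Finset.sum_add_distrib, Finset.sum_add_distrib, Finset.sum_add_distrib,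
    single_sum', single_sum', Finset.sum_comm]
  congr 3
  exact Finset.sum_congr rfl fun x _ => single_sum' (w x) cw k j

private lemma dot_pert' {ι : Type*} (Cb X : (Fin m → Fin n) → ℝ) (a b : Fin m → Fin n)
    (ca cb : ℝ) (K : Finset ι) (w : ι → (Fin m → Fin n)) (cw : ℝ) :
    dot Cb (fun v => X v + ((if v = a then ca else 0) + ((if v = b then cb else 0)
        + ∑ x ∈ K, if v = w x then cw else 0)))
      = dot Cb X + (Cb a * ca + (Cb b * cb + ∑ x ∈ K, Cb (w x) * cw)) := by
  unfold dot
  have hsingle : ∀ (e : Fin m → Fin n) (c : ℝ),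
      ∑ v : Fin m → Fin n, Cb v * (if v = e then c else 0) = Cb e * c := by
    intro e c
    rw [Finset.sum_eq_single e]
    · simp
    · intro b _ hb; simp [hb]
    · simp
  have hsplit : ∀ v : Fin m → Fin n,
      Cb v * (X v + ((if v = a then ca else 0) + ((if v = b then cb else 0)
        + ∑ x ∈ K, if v = w x then cw else 0)))
      = Cb v * X v + (Cb v * (if v = a then ca else 0) + (Cb v * (if v = b then cb else 0)
        + ∑ x ∈ K, Cb v * (if v = w x then cw else 0))) := by
    intro v
    rw [mul_add, mul_add, mul_add, Finset.mul_sum]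
  rw [Finset.sum_congr rfl (fun v _ => hsplit v)]
  rw [Finset.sum_add_distrib, Finset.sum_add_distrib, Finset.sum_add_distrib,
    hsingle, hsingle, Finset.sum_comm]
  congr 3
  exact Finset.sum_congr rfl fun x _ => hsingle (w x) cw

private lemma sum_marg' (X : (Fin m → Fin n) → ℝ) (k : Fin m) :
    ∑ j, marg X k j = ∑ v, X v := by
  unfold marg
  rw [Finset.sum_comm]
  refine Finset.sum_congr rfl fun v _ => ?_
  rw [Finset.sum_eq_single (v k)]
  · simp
  · intro b _ hb; rw [if_neg (fun h => hb h.symm)]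
  · simp

private lemma D_nonneg_aux' (m : ℕ) (hm : 3 ≤ m) (D : ℕ → ℝ) (hD0 : 0 ≤ D 0)
    (hDm1 : D (m-1) = 0)
    (hΔ : ∀ j, 1 ≤ j → j ≤ m-2 → D (j+1) + D (j-1) - 2 * D j ≤ 0) :
    ∀ i, i ≤ m-1 → 0 ≤ D i := by
  have hmono : ∀ a b : ℕ, a ≤ b → b ≤ m-2 → D (b+1) - D b ≤ D (a+1) - D a := by
    intro a b hab
    induction b, hab using Nat.le_induction with
    | base => intro _; exact le_refl _
    | succ b hb ih =>
      intro hb2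
      have h1 := hΔ (b+1) (by omega) (by omega)
      have h2 := ih (by omega)
      simp only [Nat.add_sub_cancel] at h1
      linarith
  intro i hi
  by_contra hneg
  push_neg at hneg
  have hi1 : 1 ≤ i := by
    by_contra h; push_neg at h
    interval_cases i; linarith
  have hi2 : i ≤ m - 2 := by
    rcases Nat.lt_or_ge i (m-1) with h | h
    · omega
    · exfalso; have : i = m - 1 := by omega
      rw [this, hDm1] at hneg; linarith
  have hsum1 : ∑ j ∈ range i, (D (j+1) - D j) = D i - D 0 := Finset.sum_range_sub D i
  have h1 : ∃ j1 ∈ range i, D (j1+1) - D j1 < 0 := by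
    by_contra h; push_neg at h
    have : (0:ℝ) ≤ D i - D 0 := hsum1 ▸ Finset.sum_nonneg h
    linarith
  have hsum2 : ∑ j ∈ Finset.Ico i (m-1), (D (j+1) - D j) = D (m-1) - D i := by
    rw [Finset.sum_Ico_eq_sub _ (by omega : i ≤ m-1), Finset.sum_range_sub D,
      Finset.sum_range_sub D]
    ring
  have h2 : ∃ j2 ∈ Finset.Ico i (m-1), 0 < D (j2+1) - D j2 := by
    by_contra h; push_neg at h
    have : D (m-1) - D i ≤ 0 := hsum2 ▸ Finset.sum_nonpos h
    rw [hDm1] at this; linarith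
  obtain ⟨j1, hj1, hneg1⟩ := h1
  obtain ⟨j2, hj2, hpos2⟩ := h2
  rw [Finset.mem_range] at hj1
  rw [Finset.mem_Ico] at hj2
  have := hmono j1 j2 (by omega) (by omega)
  linarith

end Aux

/-- Step 2 of the proof of Theorem 3.2: under the assumptions of the
second equivalent form, every minimizer vanishes at the index `(n+1, …, n+1)`,
i.e. `W_{[m]} = 0`. -/
theorem mpot_second_form_top_layer_zero {m n : ℕ} (hm : 3 ≤ m) (hn : 1 ≤ n)
    (C : (Fin m → Fin n) → ℝ) (hC : ∀ v, 0 ≤ C v)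
    (r : Fin m → Fin n → ℝ) (hr : ∀ k j, 0 ≤ r k j)
    (s : ℝ) (hs0 : 0 ≤ s) (hs : ∀ k, s ≤ ∑ j, r k j)
    (D : ℕ → ℝ) (hD0 : IsGreatest (Set.range C) (D 0))
    (hDm1 : D (m - 1) = 0) (hDm : 0 < D m)
    (hconc3 : m = 3 → D 2 + D 0 - 2 * D 1 ≤ 0)
    (hconc : 4 ≤ m → ∀ i, 1 ≤ i → i ≤ m - 3 →
      D (i + 1) + D (i - 1) - 2 * D i
          ≤ ((m - 1 - i : ℕ) : ℝ) * (D (i + 2) + D i - 2 * D (i + 1)) ∧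
        ((m - 1 - i : ℕ) : ℝ) * (D (i + 2) + D i - 2 * D (i + 1)) ≤ 0)
    (Xb : (Fin m → Fin (n + 1)) → ℝ) (hmem : Xb ∈ PiEq (extMarg2 r s))
    (hopt : ∀ Y ∈ PiEq (extMarg2 r s), dot (extCost C D) Xb ≤ dot (extCost C D) Y) :
    Xb (fun _ => Fin.last n) = 0 ∧ layerSum Xb Finset.univ = 0 := by
  obtain ⟨hpos, hmarg⟩ := hmem
  set top : Fin m → Fin (n + 1) := fun _ => Fin.last n with htopdef
  have hD0nn : 0 ≤ D 0 := by
    obtain ⟨v0, hv0⟩ := hD0.1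
    rw [← hv0]; exact hC v0
  have hΔ : ∀ j, 1 ≤ j → j ≤ m-2 → D (j+1) + D (j-1) - 2 * D j ≤ 0 := by
    intro j h1 h2
    by_cases hm4 : 4 ≤ m
    · by_cases hj : j ≤ m - 3
      · exact le_trans (hconc hm4 j h1 hj).1 (hconc hm4 j h1 hj).2
      · have hje : j = m - 2 := by omega
        have h := (hconc hm4 (m-3) (by omega) (le_refl _)).2
        have e1 : m - 3 + 1 = m - 2 := by omega
        have e2 : m - 3 + 2 = m - 1 := by omega
        have e3 : m - 1 - (m - 3) = 2 := by omega
        rw [e1, e2, e3] at h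
        have ej1 : j + 1 = m - 1 := by omega
        have ej2 : j - 1 = m - 3 := by omega
        rw [ej1, ej2, hje]
        push_cast at h
        linarith
    · have hm3 : m = 3 := by omega
      have hj1 : j = 1 := by omega
      subst hj1
      simpa using hconc3 hm3
  have hDnn : ∀ i, i ≤ m - 1 → 0 ≤ D i := D_nonneg_aux' m hm D hD0nn hDm1 hΔ
  have hnLast_top : nLast top = m := by
    simp [nLast, htopdef]
  have hcost_top : extCost C D top = D m := by
    rw [extCost, dif_neg, hnLast_top]
    push_neg
    exact ⟨⟨0, by omega⟩, rfl⟩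
  set R : ℝ := ∑ i, ∑ j, r i j with hRdef
  have hmargL : ∀ k, marg Xb k (Fin.last n) = R - (∑ j, r k j) - ((m:ℝ) - 1) * s := by
    intro k
    rw [hmarg k (Fin.last n)]
    unfold extMarg2
    rw [Fin.snoc_last]
    have h := Finset.sum_erase_add univ (fun i => ∑ j, r i j) (mem_univ k)
    rw [hRdef]
    linarith
  have hmargC : ∀ k (j : Fin n), marg Xb k (Fin.castSucc j) = r k j := by
    intro k j
    rw [hmarg k (Fin.castSucc j)]
    unfold extMarg2
    rw [Fin.snoc_castSucc]
  have k0 : Fin m := ⟨0, by omega⟩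
  have hM : ∑ v, Xb v = R - ((m:ℝ) - 1) * s := by
    rw [← sum_marg' Xb k0, Fin.sum_univ_castSucc, hmargL k0,
      Finset.sum_congr rfl fun j _ => hmargC k0 j]
    have h := Finset.sum_erase_add univ (fun i => ∑ j, r i j) (mem_univ k0)
    rw [hRdef]
    linarith
  have hSlast : ∑ v : Fin m → Fin (n+1), (nLast v : ℝ) * Xb v
      = ∑ k : Fin m, marg Xb k (Fin.last n) := by
    have h1 : ∀ v : Fin m → Fin (n+1), (nLast v : ℝ) * Xb v
        = ∑ k : Fin m, (if v k = Fin.last n then Xb v else 0) := by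
      intro v
      rw [nLast, Finset.card_filter]
      push_cast
      rw [Finset.sum_mul]
      refine Finset.sum_congr rfl fun k _ => ?_
      by_cases h : v k = Fin.last n <;> simp [h]
    rw [Finset.sum_congr rfl fun v _ => h1 v, Finset.sum_comm]
    rfl
  have hId : ∑ v : Fin m → Fin (n+1), ((m:ℝ) - 1 - (nLast v : ℝ)) * Xb v
      = ((m:ℝ) - 1) * s := by
    have expand : ∀ v : Fin m → Fin (n+1), ((m:ℝ) - 1 - (nLast v : ℝ)) * Xb v
        = ((m:ℝ) - 1) * Xb v - (nLast v : ℝ) * Xb v := fun v => by ring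
    rw [Finset.sum_congr rfl fun v _ => expand v, Finset.sum_sub_distrib,
      ← Finset.mul_sum, hM, hSlast, Finset.sum_congr rfl fun k _ => hmargL k,
      Finset.sum_sub_distrib, Finset.sum_sub_distrib, Finset.sum_const,
      Finset.card_univ, Fintype.card_fin, Finset.sum_const, Finset.card_univ,
      Fintype.card_fin, ← hRdef]
    have hm3 : (3:ℝ) ≤ (m:ℝ) := by exact_mod_cast hm
    rw [nsmul_eq_mul, nsmul_eq_mul]
    ring
  have hkey : Xb top = 0 := by
    by_contra hne
    have hδ : 0 < Xb top := lt_of_le_of_ne (hpos top) (Ne.symm hne)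
    have hexists : ∃ u, nLast u ≤ m - 2 ∧ 0 < Xb u := by
      by_contra h; push_neg at h
      have hle : ∀ v : Fin m → Fin (n+1), ((m:ℝ) - 1 - (nLast v : ℝ)) * Xb v ≤ 0 := by
        intro v
        by_cases hv : nLast v ≤ m - 2
        · have h0 : Xb v = 0 := le_antisymm (h v hv) (hpos v)
          rw [h0, mul_zero]
        · push_neg at hv
          have hcast : ((m:ℝ) - 1) ≤ (nLast v : ℝ) := by
            have : m - 1 ≤ nLast v := by omega
            have h2 : ((m - 1 : ℕ) : ℝ) ≤ (nLast v : ℝ) := by exact_mod_cast this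
            have h3 : ((m - 1 : ℕ) : ℝ) = (m:ℝ) - 1 := by
              have : 1 ≤ m := by omega
              push_cast [this]
              ring
            linarith
          exact mul_nonpos_of_nonpos_of_nonneg (by linarith) (hpos v)
      have hstrict : ∑ v : Fin m → Fin (n+1), ((m:ℝ) - 1 - (nLast v : ℝ)) * Xb v < 0 := by
        have h0 : ((m:ℝ) - 1 - (nLast top : ℝ)) * Xb top < 0 := by
          rw [hnLast_top]
          have : (m:ℝ) - 1 - (m:ℝ) = -1 := by ring
          rw [this]
          linarith
        calc ∑ v : Fin m → Fin (n+1), ((m:ℝ) - 1 - (nLast v : ℝ)) * Xb v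
            < ∑ v : Fin m → Fin (n+1), (0:ℝ) := by
              apply Finset.sum_lt_sum (fun v _ => hle v)
              exact ⟨top, mem_univ top, h0⟩
          _ = 0 := by simp
      rw [hId] at hstrict
      have hm3 : (3:ℝ) ≤ (m:ℝ) := by exact_mod_cast hm
      nlinarith
    obtain ⟨u0, hu0l, hu0p⟩ := hexists
    set K := univ.filter (fun k => u0 k ≠ Fin.last n) with hKdef
    have hκm : nLast u0 + K.card = m := by
      rw [hKdef, nLast]
      rw [Finset.card_filter_add_card_filter_not (fun k => u0 k = Fin.last n)]
      simp
    have hκ2 : 2 ≤ K.card := by omega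
    have hKmem : ∀ k ∈ K, u0 k ≠ Fin.last n := fun k hk => (mem_filter.mp hk).2
    have hKmem' : ∀ k, k ∉ K → u0 k = Fin.last n := by
      intro k hk
      by_contra hcon
      exact hk (mem_filter.mpr ⟨mem_univ k, hcon⟩)
    have hκR : (2:ℝ) ≤ (K.card : ℝ) := by exact_mod_cast hκ2
    set ε := min (Xb top) (((K.card : ℝ) - 1) * Xb u0) with hεdef
    have hεpos : 0 < ε := lt_min hδ (mul_pos (by linarith) hu0p)
    set β := ε / ((K.card : ℝ) - 1) with hβdef
    have hβpos : 0 < β := div_pos hεpos (by linarith)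
    have hβle : β ≤ Xb u0 := by
      rw [hβdef, div_le_iff₀ (by linarith : (0:ℝ) < (K.card : ℝ) - 1)]
      calc ε ≤ ((K.card : ℝ) - 1) * Xb u0 := min_le_right _ _
        _ = Xb u0 * ((K.card : ℝ) - 1) := by ring
    have hεβ : ε = ((K.card : ℝ) - 1) * β := by
      rw [hβdef, mul_comm, div_mul_cancel₀ _ (by linarith : ((K.card : ℝ) - 1) ≠ 0)]
    set w : Fin m → (Fin m → Fin (n + 1)) :=
      fun k ℓ => if ℓ = k then u0 k else Fin.last n with hwdef
    obtain ⟨k1, hk1K⟩ : K.Nonempty := Finset.card_pos.mp (by omega)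
    have htop_ne_u0 : top ≠ u0 := by
      intro h
      exact hKmem k1 hk1K (by rw [← h])
    have htop_ne_w : ∀ k ∈ K, top ≠ w k := by
      intro k hk h
      apply hKmem k hk
      have : top k = w k k := by rw [h]
      simp [hwdef, htopdef] at this
      exact this.symm
    have hu0_ne_w : ∀ k ∈ K, u0 ≠ w k := by
      intro k hk h
      obtain ⟨k2, hk2K, hk2ne⟩ := Finset.exists_mem_ne (show 1 < K.card by omega) k
      apply hKmem k2 hk2K
      have : u0 k2 = w k k2 := by rw [h]
      simpa [hwdef, hk2ne] using this
    have hw_at : ∀ k, w k k = u0 k := by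
      intro k; simp [hwdef]
    have hw_ne : ∀ k ℓ, ℓ ≠ k → w k ℓ = Fin.last n := by
      intro k ℓ h; simp [hwdef, h]
    have hcost_w : ∀ k ∈ K, extCost C D (w k) = 0 := by
      intro k hk
      have hnl : nLast (w k) = m - 1 := by
        rw [nLast]
        have hf : (univ.filter fun ℓ => w k ℓ = Fin.last n) = univ.erase k := by
          ext ℓ
          simp only [mem_filter, mem_univ, true_and]
          rw [Finset.mem_erase]
          constructor
          · intro h
            refine ⟨fun hek => ?_, mem_univ ℓ⟩
            rw [hek, hw_at] at h
            exact hKmem k hk h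
          · intro h
            exact hw_ne k ℓ h.1
        rw [hf, Finset.card_erase_of_mem (mem_univ k), Finset.card_univ, Fintype.card_fin]
      rw [extCost, dif_neg, hnl, hDm1]
      push_neg
      obtain ⟨ℓ, _, hℓne⟩ := Finset.exists_mem_ne
        (by rw [Finset.card_univ, Fintype.card_fin]; omega : 1 < (univ : Finset (Fin m)).card) k
      exact ⟨ℓ, hw_ne k ℓ hℓne⟩
    have hcost_u0 : 0 ≤ extCost C D u0 := by
      rw [extCost]
      split
      · exact hC _
      · exact hDnn (nLast u0) (by omega)
    set Y : (Fin m → Fin (n + 1)) → ℝ := fun v => Xb v + ((if v = top then -ε else 0)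
      + ((if v = u0 then -β else 0) + ∑ k ∈ K, if v = w k then β else 0)) with hYdef
    have hYmem : Y ∈ PiEq (extMarg2 r s) := by
      constructor
      · intro v
        simp only [hYdef]
        by_cases hv1 : v = top
        · have h2 : (if v = u0 then -β else 0) = 0 := by
            rw [if_neg (by rw [hv1]; exact htop_ne_u0)]
          have h3 : ∑ k ∈ K, (if v = w k then β else 0) = 0 :=
            Finset.sum_eq_zero fun k hk => by
              rw [if_neg (by rw [hv1]; exact htop_ne_w k hk)]
          rw [if_pos hv1, h2, h3, hv1]
          have h4 : ε ≤ Xb top := min_le_left _ _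
          linarith
        · by_cases hv2 : v = u0
          · have h3 : ∑ k ∈ K, (if v = w k then β else 0) = 0 :=
              Finset.sum_eq_zero fun k hk => by
                rw [if_neg (by rw [hv2]; exact hu0_ne_w k hk)]
            rw [if_neg hv1, if_pos hv2, h3, hv2]
            linarith
          · have hsum0 : 0 ≤ ∑ k ∈ K, (if v = w k then β else 0) := by
              apply Finset.sum_nonneg
              intro k _
              split
              · exact hβpos.le
              · exact le_refl 0
            rw [if_neg hv1, if_neg hv2]
            have := hpos v
            linarith
      · intro k' j
        rw [hYdef, marg_pert', hmarg k' j]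
        have hz : (if top k' = j then -ε else 0) + ((if u0 k' = j then -β else 0)
            + ∑ k ∈ K, if w k k' = j then β else 0) = 0 := by
          by_cases hj : j = Fin.last n
          · subst hj
            have ht : top k' = Fin.last n := rfl
            rw [if_pos ht]
            have hterm : ∀ k ∈ K, (if w k k' = Fin.last n then β else 0)
                = β - (if k' = k then β else 0) := by
              intro k hk
              by_cases hkk : k' = k
              · subst hkk
                rw [hw_at, if_neg (hKmem k' hk), if_pos rfl]
                ring
              · rw [hw_ne k k' hkk, if_pos rfl, if_neg hkk]
                ring
            rw [Finset.sum_congr rfl hterm, Finset.sum_sub_distrib, Finset.sum_const,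
              Finset.sum_ite_eq, nsmul_eq_mul]
            by_cases hk' : k' ∈ K
            · rw [if_pos hk', if_neg (hKmem k' hk')]
              rw [hεβ]; ring
            · rw [if_neg hk', if_pos (hKmem' k' hk')]
              rw [hεβ]; ring
          · have ht : ¬(top k' = j) := fun h => hj h.symm
            rw [if_neg ht]
            have hterm : ∀ k ∈ K, (if w k k' = j then β else 0)
                = (if k' = k then (if u0 k' = j then β else 0) else 0) := by
              intro k hk
              by_cases hkk : k' = k
              · subst hkk
                rw [hw_at, if_pos rfl]
              · rw [hw_ne k k' hkk, if_neg (fun h => hj h.symm), if_neg hkk]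
            rw [Finset.sum_congr rfl hterm, Finset.sum_ite_eq]
            by_cases hk' : k' ∈ K
            · rw [if_pos hk']
              by_cases hu : u0 k' = j
              · rw [if_pos hu, if_pos hu]; ring
              · rw [if_neg hu, if_neg hu]; ring
            · rw [if_neg hk', if_neg (show ¬ u0 k' = j from fun h => hj (h ▸ hKmem' k' hk'))]
              ring
        rw [hz, add_zero]
    have hYcost : dot (extCost C D) Y
        = dot (extCost C D) Xb - (ε * D m + β * extCost C D u0) := by
      rw [hYdef, dot_pert', hcost_top]
      have hsum0 : ∑ k ∈ K, extCost C D (w k) * β = 0 := by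
        apply Finset.sum_eq_zero
        intro k hk
        rw [hcost_w k hk, zero_mul]
      rw [hsum0]
      ring
    have hcontra := hopt Y hYmem
    rw [hYcost] at hcontra
    nlinarith [mul_pos hεpos hDm, mul_nonneg hβpos.le hcost_u0]
  refine ⟨hkey, ?_⟩
  rw [layerSum, Finset.sum_eq_single top]
  · rw [if_pos, hkey]
    intro ℓ
    simp [htopdef]
  · intro u _ hu
    have hcon : ¬ (∀ ℓ, (u ℓ = Fin.last n ↔ ℓ ∈ (univ : Finset (Fin m)))) := by
      intro h
      apply hu
      funext ℓ
      exact (h ℓ).mpr (mem_univ ℓ)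
    rw [if_neg hcon]
  · simp
end
end

section
/- Let m ≥ 3 and let D_0, D_1, …, D_{m−1} be reals with D_{m−1} = 0 whose second differences Δ_j^{(2)} := D_{j+1} + D_{j−1} − 2D_j satisfy Δ_j^{(2)} ≤ 0 for all j ∈ [m−2] and Δ_j^{(2)} ≤ (m−1−j)Δ_{j+1}^{(2)} for all j ∈ [m−3]. Then for every i ∈ [m−2], setting k = m − i + 1, one has D_{i−1} + (k−1)D_{i+1} − (k−1)D_i ≤ 0. -/
lemma concave_aux {M : ℕ} (D : ℕ → ℝ) (hDm1 : D (M + 2) = 0)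
    (h1 : ∀ j, 1 ≤ j → j ≤ M + 1 → D (j + 1) + D (j - 1) - 2 * D j ≤ 0)
    (h2 : ∀ j, 1 ≤ j → j ≤ M →
      D (j + 1) + D (j - 1) - 2 * D j
        ≤ ((M + 2 - j : ℕ) : ℝ) * (D (j + 2) + D j - 2 * D (j + 1))) :
    ∀ j, j ≤ M →
      D (M - j) + ((j + 2 : ℕ) : ℝ) * D (M - j + 2) - ((j + 2 : ℕ) : ℝ) * D (M - j + 1) ≤ 0 := by
  intro j
  induction j with
  | zero =>
    intro _
    have h := h1 (M + 1) (by omega) (by omega)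
    simp only [Nat.add_sub_cancel] at h
    push_cast
    simp only [Nat.sub_zero]
    linarith
  | succ j ih =>
    intro hj
    obtain ⟨a, ha⟩ : ∃ a, M - (j + 1) = a := ⟨_, rfl⟩
    have ha1 : M - j = a + 1 := by omega
    have ih' := ih (by omega)
    have h2' := h2 (a + 1) (by omega) (by omega)
    have hco : M + 2 - (a + 1) = j + 2 := by omega
    rw [hco] at h2'
    simp only [Nat.add_sub_cancel] at h2'
    rw [ha, ha1] at *
    push_cast at h2' ih' ⊢
    linarith

/-- key inequality in Step 3 of the proof of Theorem 3.2: if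
`D_{m−1} = 0`, the second differences `Δ_j^{(2)} = D_{j+1} + D_{j−1} − 2D_j` are
nonpositive for `j ∈ [m−2]` and satisfy `Δ_j^{(2)} ≤ (m−1−j)Δ_{j+1}^{(2)}` for
`j ∈ [m−3]`, then for every `i ∈ [m−2]`, with `k = m − i + 1`,
`D_{i−1} + (k−1)D_{i+1} − (k−1)D_i ≤ 0`. -/
theorem concave_sequence_inequality {m : ℕ} (hm : 3 ≤ m) (D : ℕ → ℝ)
    (hDm1 : D (m - 1) = 0)
    (h1 : ∀ j, 1 ≤ j → j ≤ m - 2 → D (j + 1) + D (j - 1) - 2 * D j ≤ 0)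
    (h2 : ∀ j, 1 ≤ j → j ≤ m - 3 →
      D (j + 1) + D (j - 1) - 2 * D j
        ≤ ((m - 1 - j : ℕ) : ℝ) * (D (j + 2) + D j - 2 * D (j + 1))) :
    ∀ i, 1 ≤ i → i ≤ m - 2 →
      D (i - 1) + ((m - i : ℕ) : ℝ) * D (i + 1) - ((m - i : ℕ) : ℝ) * D i ≤ 0 := by
  intro i hi1 hi2
  set M := m - 3 with hM
  have hm2 : M + 2 = m - 1 := by omega
  have hm1 : M + 1 = m - 2 := by omega
  have key := concave_aux D (by rw [hm2]; exact hDm1)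
    (fun j hj1 hj2 => h1 j hj1 (by omega))
    (fun j hj1 hj2 => by
      have := h2 j hj1 (by omega)
      have : M + 2 - j = m - 1 - j := by omega
      rw [this]
      exact h2 j hj1 (by omega))
    (m - 2 - i) (by omega)
  have e1 : M - (m - 2 - i) = i - 1 := by omega
  have e2 : i - 1 + 2 = i + 1 := by omega
  have e3 : i - 1 + 1 = i := by omega
  have e4 : m - 2 - i + 2 = m - i := by omega
  rw [e1, e2, e3, e4] at key
  exact key
end

section
/- Let m ≥ 3 and D_0 > 0. Define Δ_j^{(2)} := −(m−1−j)! for j ∈ [m−2], Δ_0^{(1)} := −(Σ_{i=1}^{m−2} (m−1−i)Δ_i^{(2)} + D_0)/(m−1), and D_i := Δ_{i−1}^{(2)} + 2Δ_{i−2}^{(2)} + … + (i−1)Δ_1^{(2)} + iΔ_0^{(1)} + D_0 for i = 1, …, m−1. Then the resulting sequence satisfies: (i) D_{m−1} = 0; (ii) D_{j+1} + D_{j−1} − 2D_j = Δ_j^{(2)} ≤ (m−1−j)Δ_{j+1}^{(2)} ≤ 0 for all j ∈ [m−3]; and (iii) D_i ≥ 0 for all 0 ≤ i ≤ m−1. 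-/
open Finset

/-- Remark after Theorem 3.2: taking `Δ_j^{(2)} := −(m−1−j)!` for
`j ∈ [m−2]`, `Δ_0^{(1)} := −(Σ_{i=1}^{m−2} (m−1−i)Δ_i^{(2)} + D_0)/(m−1)`, and
`D_i := Σ_{j=1}^{i−1} (i−j)Δ_j^{(2)} + iΔ_0^{(1)} + D_0` produces a sequence with
`D_{m−1} = 0`, second differences equal to `Δ_j^{(2)}` satisfying
`Δ_j^{(2)} ≤ (m−1−j)Δ_{j+1}^{(2)} ≤ 0` for `j ∈ [m−3]`, and `D_i ≥ 0` for
`0 ≤ i ≤ m−1`. -/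
theorem construct_concave_sequence {m : ℕ} (hm : 3 ≤ m) (D0 : ℝ) (hD0 : 0 < D0) :
    let Δ2 : ℕ → ℝ := fun j => -((m - 1 - j).factorial : ℝ)
    let Δ01 : ℝ :=
      -((∑ i ∈ Finset.Icc 1 (m - 2), ((m - 1 - i : ℕ) : ℝ) * Δ2 i) + D0) / ((m : ℝ) - 1)
    let D : ℕ → ℝ := fun i =>
      (∑ j ∈ Finset.Icc 1 (i - 1), ((i - j : ℕ) : ℝ) * Δ2 j) + (i : ℝ) * Δ01 + D0
    D (m - 1) = 0 ∧
      (∀ j, 1 ≤ j → j ≤ m - 3 →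
        D (j + 1) + D (j - 1) - 2 * D j = Δ2 j ∧
          Δ2 j ≤ ((m - 1 - j : ℕ) : ℝ) * Δ2 (j + 1) ∧
          ((m - 1 - j : ℕ) : ℝ) * Δ2 (j + 1) ≤ 0) ∧
      ∀ i, i ≤ m - 1 → 0 ≤ D i := by
  intro Δ2 Δ01 D
  have hΔ2 : ∀ j, Δ2 j = -((m - 1 - j).factorial : ℝ) := fun j => rfl
  have hΔ01 : Δ01 =
      -((∑ i ∈ Finset.Icc 1 (m - 2), ((m - 1 - i : ℕ) : ℝ) * Δ2 i) + D0) / ((m : ℝ) - 1) := rfl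
  have hD : ∀ i, D i =
      (∑ j ∈ Finset.Icc 1 (i - 1), ((i - j : ℕ) : ℝ) * Δ2 j) + (i : ℝ) * Δ01 + D0 :=
    fun i => rfl
  have hmR : (3 : ℝ) ≤ (m : ℝ) := by exact_mod_cast hm
  have hΔ2nonpos : ∀ j, Δ2 j ≤ 0 := by
    intro j
    rw [hΔ2]
    have : (0 : ℝ) ≤ ((m - 1 - j).factorial : ℝ) := by positivity
    linarith
  -- the increment sequence
  set s : ℕ → ℝ := fun i => (∑ k ∈ Finset.Icc 1 i, Δ2 k) + Δ01 with hs
  have hstep : ∀ n, s (n + 1) = s n + Δ2 (n + 1) := by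
    intro n
    simp only [hs]
    rw [Finset.sum_Icc_succ_top (by omega : 1 ≤ n + 1)]
    ring
  have hDsucc : ∀ i, D (i + 1) = D i + s i := by
    intro i
    rw [hD (i + 1), hD i]
    have h1 : i + 1 - 1 = i := by omega
    rw [h1]
    have key : (∑ j ∈ Finset.Icc 1 i, ((i + 1 - j : ℕ) : ℝ) * Δ2 j)
        = (∑ j ∈ Finset.Icc 1 (i - 1), ((i - j : ℕ) : ℝ) * Δ2 j)
          + ∑ j ∈ Finset.Icc 1 i, Δ2 j := by
      have e1 : (∑ j ∈ Finset.Icc 1 i, ((i + 1 - j : ℕ) : ℝ) * Δ2 j)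
          = ∑ j ∈ Finset.Icc 1 i, (((i - j : ℕ) : ℝ) * Δ2 j + Δ2 j) := by
        refine Finset.sum_congr rfl fun j hj => ?_
        have hj' : j ≤ i := (Finset.mem_Icc.mp hj).2
        have : i + 1 - j = (i - j) + 1 := by omega
        rw [this]
        push_cast
        ring
      rw [e1, Finset.sum_add_distrib]
      congr 1
      rcases i with _ | n
      · simp
      · rw [Finset.sum_Icc_succ_top (by omega : 1 ≤ n + 1)]
        have : n + 1 - 1 = n := by omega
        rw [this]
        simp
    rw [key]
    simp only [hs]
    push_cast
    ring
  have hDsum : ∀ i, D i = D 0 + ∑ t ∈ Finset.range i, s t := by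
    intro i
    induction i with
    | zero => simp
    | succ n ih => rw [hDsucc n, ih, Finset.sum_range_succ]; ring
  have hD00 : D 0 = D0 := by
    rw [hD 0]
    simp
  -- (i): D (m-1) = 0
  have hDm1 : D (m - 1) = 0 := by
    rw [hD (m - 1)]
    have h1 : m - 1 - 1 = m - 2 := by omega
    rw [h1, hΔ01]
    have h2 : ((m - 1 : ℕ) : ℝ) = (m : ℝ) - 1 := by
      have : (1 : ℕ) ≤ m := by omega
      push_cast [Nat.cast_sub this]
      ring
    rw [h2]
    have h3 : (m : ℝ) - 1 ≠ 0 := by linarith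
    field_simp
    ring
  refine ⟨hDm1, ?_, ?_⟩
  · -- (ii)
    intro j hj1 hj3
    refine ⟨?_, ?_, ?_⟩
    · obtain ⟨k, rfl⟩ : ∃ k, j = k + 1 := ⟨j - 1, by omega⟩
      have h1 : k + 1 - 1 = k := by omega
      rw [h1, hDsucc (k + 1), hDsucc k, hstep k]
      ring
    · have h1 : m - 1 - j = (m - 2 - j) + 1 := by omega
      have h2 : m - 1 - (j + 1) = m - 2 - j := by omega
      rw [hΔ2, hΔ2, h1, h2]
      apply le_of_eq
      push_cast [Nat.factorial_succ]
      ring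
    · have h1 : (0 : ℝ) ≤ ((m - 1 - j : ℕ) : ℝ) := by positivity
      exact mul_nonpos_of_nonneg_of_nonpos h1 (hΔ2nonpos (j + 1))
  · -- (iii)
    have hs_anti : Antitone s := by
      apply antitone_nat_of_succ_le
      intro n
      rw [hstep n]
      have := hΔ2nonpos (n + 1)
      linarith
    intro i hi
    by_cases hpos : ∀ t < i, 0 ≤ s t
    · rw [hDsum i, hD00]
      have : 0 ≤ ∑ t ∈ Finset.range i, s t :=
        Finset.sum_nonneg fun t ht => hpos t (Finset.mem_range.mp ht)
      linarith
    · push_neg at hpos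
      obtain ⟨t, ht, hst⟩ := hpos
      have h1 : D (m - 1) = D i + ∑ u ∈ Finset.Ico i (m - 1), s u := by
        rw [hDsum (m - 1), hDsum i, Finset.range_eq_Ico, Finset.range_eq_Ico,
          ← Finset.sum_Ico_consecutive _ (Nat.zero_le i) hi]
        ring
      have h2 : ∑ u ∈ Finset.Ico i (m - 1), s u ≤ 0 := by
        refine Finset.sum_nonpos fun u hu => ?_
        have htu : t ≤ u := by
          have := (Finset.mem_Ico.mp hu).1
          omega
        have := hs_anti htu
        linarith
      rw [hDm1] at h1
      linarith
end

section
/- Under the assumptions and constructions of the second equivalent form, for every X ∈ Π^s(r_1,…,r_m) define X̃ ∈ ℝ_+^{(n+1)^m} by: X̃_v = X_v for v ∈ [n]^m; for each k ∈ [m] and each i_k ∈ [n], at the index u ∈ T_{[m]∖{k}} whose k-th coordinate is i_k, set X̃_u = (r_k)_{i_k} − Σ_{v ∈ [n]^m, v_k = i_k} X_v; and X̃_u = 0 at all other indices. Then X̃ ∈ Π(r̄_1^{(2)},…,r̄_m^{(2)}) and ⟨C̄^{(2)}, X̃⟩ = ⟨C, X⟩. Consequently, min_{X̄ ∈ Π(r̄_1^{(2)},…,r̄_m^{(2)})}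 ⟨C̄^{(2)}, X̄⟩ ≤ min_{X ∈ Π^s(r_1,…,r_m)} ⟨C, X⟩. -/
open Finset

noncomputable section

open MPOT

namespace MPOTAux

variable {m n : ℕ}

/-- The spoke index in `T_{[m]∖{k}}` whose `k`-th coordinate is `i`. -/
def spoke (k : Fin m) (i : Fin n) : Fin m → Fin (n + 1) :=
  fun ℓ => if ℓ = k then i.castSucc else Fin.last n

lemma emb_ne_last (v : Fin m → Fin n) (i : Fin m) : emb v i ≠ Fin.last n :=
  Fin.ne_of_lt (Fin.castSucc_lt_last _)

lemma spoke_apply_self (k : Fin m) (i : Fin n) : spoke k i k = i.castSucc := by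
  simp [spoke]

lemma spoke_apply_ne {k ℓ : Fin m} (h : ℓ ≠ k) (i : Fin n) :
    spoke k i ℓ = Fin.last n := by simp [spoke, h]

lemma filter_spoke (k : Fin m) (i : Fin n) :
    (univ.filter fun ℓ => spoke k i ℓ = Fin.last n) = univ.erase k := by
  ext ℓ
  by_cases h : ℓ = k <;> simp [spoke, h, (Fin.castSucc_lt_last i).ne]

lemma nLast_spoke (k : Fin m) (i : Fin n) : nLast (spoke k i) = m - 1 := by
  rw [nLast, filter_spoke, card_erase_of_mem (mem_univ k)]
  simp

lemma nLast_emb (v : Fin m → Fin n) : nLast (emb v) = 0 := by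
  rw [nLast, card_eq_zero, filter_eq_empty_iff]
  exact fun ℓ _ => emb_ne_last v ℓ

lemma nLast_zero_iff {u : Fin m → Fin (n + 1)} :
    nLast u = 0 ↔ ∀ i, u i ≠ Fin.last n := by
  rw [nLast, card_eq_zero, filter_eq_empty_iff]
  simp

lemma emb_of_nLast_zero {u : Fin m → Fin (n + 1)} (h : nLast u = 0) :
    ∃ v : Fin m → Fin n, u = emb v := by
  have h' := nLast_zero_iff.mp h
  refine ⟨fun i => (u i).castPred (h' i), ?_⟩
  funext i
  simp [emb, Fin.castSucc_castPred]

lemma exists_spoke (hm : 1 ≤ m) {u : Fin m → Fin (n + 1)}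
    (h : nLast u = m - 1) : ∃ k i, u = spoke k i := by
  have hsum := Finset.card_filter_add_card_filter_not
    (s := (univ : Finset (Fin m))) (p := fun ℓ => u ℓ = Fin.last n)
  rw [nLast] at h
  have hcu : (univ : Finset (Fin m)).card = m := by simp
  have hcard : (univ.filter fun ℓ => ¬ u ℓ = Fin.last n).card = 1 := by omega
  obtain ⟨k, hk⟩ := Finset.card_eq_one.mp hcard
  have hkmem : k ∈ univ.filter fun ℓ => ¬ u ℓ = Fin.last n := by
    rw [hk]; exact mem_singleton_self k
  have hkne : u k ≠ Fin.last n := (mem_filter.mp hkmem).2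
  refine ⟨k, (u k).castPred hkne, ?_⟩
  funext ℓ
  by_cases hℓ : ℓ = k
  · subst hℓ
    rw [spoke_apply_self, Fin.castSucc_castPred]
  · rw [spoke_apply_ne hℓ]
    by_contra hne
    have : ℓ ∈ univ.filter fun ℓ => ¬ u ℓ = Fin.last n :=
      mem_filter.mpr ⟨mem_univ _, hne⟩
    rw [hk, mem_singleton] at this
    exact hℓ this

lemma spoke_inj {k k' : Fin m} {i i' : Fin n}
    (h : spoke k i = spoke k' i') : k = k' ∧ i = i' := by
  have hk : k = k' := by
    by_contra hne
    have := congrFun h k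
    rw [spoke_apply_self, spoke_apply_ne hne] at this
    exact (Fin.castSucc_lt_last i).ne this
  subst hk
  have := congrFun h k
  rw [spoke_apply_self, spoke_apply_self] at this
  exact ⟨rfl, Fin.castSucc_injective n this⟩

lemma sum_nLast_zero (g : (Fin m → Fin (n + 1)) → ℝ) :
    ∑ u ∈ univ.filter (fun u => nLast u = 0), g u
      = ∑ v : Fin m → Fin n, g (emb v) := by
  refine (Finset.sum_bij (fun v _ => emb v) ?_ ?_ ?_ ?_).symm
  · intro v _; exact mem_filter.mpr ⟨mem_univ _, nLast_emb v⟩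
  · intro v1 _ v2 _ h
    funext i
    exact Fin.castSucc_injective n (congrFun h i)
  · intro u hu
    obtain ⟨v, rfl⟩ := emb_of_nLast_zero (mem_filter.mp hu).2
    exact ⟨v, mem_univ _, rfl⟩
  · intros; rfl

lemma sum_nLast_pred (hm : 1 ≤ m) (g : (Fin m → Fin (n + 1)) → ℝ) :
    ∑ u ∈ univ.filter (fun u => nLast u = m - 1), g u
      = ∑ p : Fin m × Fin n, g (spoke p.1 p.2) := by
  refine (Finset.sum_bij (fun p _ => spoke p.1 p.2) ?_ ?_ ?_ ?_).symm
  · intro p _; exact mem_filter.mpr ⟨mem_univ _, nLast_spoke p.1 p.2⟩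
  · intro p _ q _ h
    obtain ⟨h1, h2⟩ := spoke_inj h
    exact Prod.ext h1 h2
  · intro u hu
    obtain ⟨k, i, rfl⟩ := exists_spoke hm (mem_filter.mp hu).2
    exact ⟨(k, i), mem_univ _, rfl⟩
  · intros; rfl

lemma sum_decomp (hm : 3 ≤ m) (g : (Fin m → Fin (n + 1)) → ℝ)
    (hg : ∀ u, 0 < nLast u → nLast u ≠ m - 1 → g u = 0) :
    ∑ u : Fin m → Fin (n + 1), g u
      = (∑ v : Fin m → Fin n, g (emb v))
        + ∑ p : Fin m × Fin n, g (spoke p.1 p.2) := by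
  have key : ∀ u : Fin m → Fin (n + 1),
      g u = (if nLast u = 0 then g u else 0)
        + (if nLast u = m - 1 then g u else 0) := by
    intro u
    by_cases h0 : nLast u = 0
    · rw [if_pos h0, if_neg (by omega)]; ring
    · by_cases h1 : nLast u = m - 1
      · rw [if_neg h0, if_pos h1]; ring
      · rw [if_neg h0, if_neg h1, hg u (by omega) h1]; ring
  rw [Finset.sum_congr rfl (fun u _ => key u), Finset.sum_add_distrib,
    ← Finset.sum_filter, ← Finset.sum_filter, sum_nLast_zero,
    sum_nLast_pred (by omega)]

lemma sum_marg (X : (Fin m → Fin n) → ℝ) (k : Fin m) :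
    ∑ j, marg X k j = ∑ v : Fin m → Fin n, X v := by
  simp only [marg]
  rw [Finset.sum_comm]
  refine Finset.sum_congr rfl fun v _ => ?_
  simp

lemma extCost_emb (C : (Fin m → Fin n) → ℝ) (D : ℕ → ℝ) (v : Fin m → Fin n) :
    extCost C D (emb v) = C v := by
  rw [extCost, dif_pos (emb_ne_last v)]
  congr 1

lemma extCost_spoke (hm : 2 ≤ m) (C : (Fin m → Fin n) → ℝ) (D : ℕ → ℝ)
    (k : Fin m) (i : Fin n) : extCost C D (spoke k i) = D (m - 1) := by
  have hne : ¬ ∀ ℓ, spoke k i ℓ ≠ Fin.last n := by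
    push_neg
    obtain ⟨ℓ, hℓ⟩ := Fintype.exists_ne_of_one_lt_card (by simp; omega) k
    exact ⟨ℓ, spoke_apply_ne hℓ i⟩
  rw [extCost, dif_neg hne, nLast_spoke]

/-- The explicit extension tensor `X̃`. -/
def extTensor (r : Fin m → Fin n → ℝ) (X : (Fin m → Fin n) → ℝ) :
    (Fin m → Fin (n + 1)) → ℝ :=
  fun u => (if h : ∀ i, u i ≠ Fin.last n then X (fun i => (u i).castPred (h i)) else 0)
    + ∑ p : Fin m × Fin n,
        (if u = spoke p.1 p.2 then r p.1 p.2 - marg X p.1 p.2 else 0)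

lemma extTensor_sum_zero (hm : 3 ≤ m) (r : Fin m → Fin n → ℝ)
    (X : (Fin m → Fin n) → ℝ) {u : Fin m → Fin (n + 1)} (h : nLast u ≠ m - 1) :
    (∑ p : Fin m × Fin n,
      (if u = spoke p.1 p.2 then r p.1 p.2 - marg X p.1 p.2 else 0)) = 0 :=
  Finset.sum_eq_zero fun p _ =>
    if_neg fun he => h (by rw [he, nLast_spoke])

lemma extTensor_emb (hm : 3 ≤ m) (r : Fin m → Fin n → ℝ)
    (X : (Fin m → Fin n) → ℝ) (v : Fin m → Fin n) :
    extTensor r X (emb v) = X v := by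
  rw [extTensor, dif_pos (emb_ne_last v),
    extTensor_sum_zero hm r X (by rw [nLast_emb]; omega)]
  have : (fun i => ((emb v) i).castPred (emb_ne_last v i)) = v := by
    funext i; simp [emb]
  rw [this, add_zero]

lemma extTensor_spoke (hm : 3 ≤ m) (r : Fin m → Fin n → ℝ)
    (X : (Fin m → Fin n) → ℝ) (k : Fin m) (i : Fin n) :
    extTensor r X (spoke k i) = r k i - marg X k i := by
  have hne : ¬ ∀ ℓ, spoke k i ℓ ≠ Fin.last n := by
    push_neg
    obtain ⟨ℓ, hℓ⟩ := Fintype.exists_ne_of_one_lt_card (by simp; omega) k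
    exact ⟨ℓ, spoke_apply_ne hℓ i⟩
  rw [extTensor, dif_neg hne, zero_add]
  rw [Finset.sum_eq_single (k, i)]
  · rw [if_pos rfl]
  · intro p _ hp
    refine if_neg fun he => hp ?_
    obtain ⟨h1, h2⟩ := spoke_inj he
    exact Prod.ext h1.symm h2.symm
  · intro habs
    exact absurd (mem_univ _) habs

lemma extTensor_zero (hm : 3 ≤ m) (r : Fin m → Fin n → ℝ)
    (X : (Fin m → Fin n) → ℝ) (u : Fin m → Fin (n + 1))
    (h0 : 0 < nLast u) (h1 : nLast u ≠ m - 1) : extTensor r X u = 0 := by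
  have hne : ¬ ∀ i, u i ≠ Fin.last n := fun hc =>
    absurd (nLast_zero_iff.mpr hc) (by omega)
  rw [extTensor, dif_neg hne, zero_add, extTensor_sum_zero hm r X h1]

lemma sum_prod_eq (f : Fin m → Fin n → ℝ) :
    ∑ v : Fin m → Fin n, ∏ ℓ, f ℓ (v ℓ) = ∏ ℓ, ∑ i, f ℓ i :=
  (Fintype.prod_sum f).symm

lemma marg_prod (f : Fin m → Fin n → ℝ) (k : Fin m) (j : Fin n) :
    marg (fun v => ∏ ℓ, f ℓ (v ℓ)) k j
      = f k j * ∏ ℓ ∈ univ.erase k, ∑ i, f ℓ i := by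
  classical
  have hpt : ∀ v : Fin m → Fin n,
      (if v k = j then ∏ ℓ, f ℓ (v ℓ) else 0)
        = ∏ ℓ, (fun ℓ' i => if ℓ' = k then (if i = j then f ℓ' i else 0)
            else f ℓ' i) ℓ (v ℓ) := by
    intro v
    by_cases hv : v k = j
    · rw [if_pos hv]
      refine Finset.prod_congr rfl fun ℓ _ => ?_
      by_cases hℓ : ℓ = k
      · subst hℓ; simp [hv]
      · simp [hℓ]
    · rw [if_neg hv]
      symm
      apply Finset.prod_eq_zero (mem_univ k)
      simp [hv]
  rw [marg, Finset.sum_congr rfl fun v _ => hpt v,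
    sum_prod_eq (fun ℓ' i => if ℓ' = k then (if i = j then f ℓ' i else 0)
      else f ℓ' i),
    ← Finset.prod_erase_mul univ _ (mem_univ k), mul_comm]
  congr 1
  · simp
  · refine Finset.prod_congr rfl fun ℓ hℓ => ?_
    have hne : ℓ ≠ k := Finset.ne_of_mem_erase hℓ
    simp [hne]

end MPOTAux

open MPOTAux

/-- Step 4 of the proof of Theorem 3.2: under the assumptions of the
second equivalent form, the explicit extension `X̃` of any `X ∈ Π^s(r_1, …, r_m)` —
agreeing with `X` on `[n]^m`, putting mass `(r_k)_{i} − [c_k(X)]_i` at the index of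
`T_{[m]∖{k}}` whose `k`-th coordinate is `i`, and zero elsewhere — belongs to
`Π(r̄_1^{(2)}, …, r̄_m^{(2)})` and has the same transport cost; consequently the optimal
value of the extended problem is at most that of the partial problem. -/
theorem mpot_second_form_extension {m n : ℕ} (hm : 3 ≤ m) (hn : 1 ≤ n)
    (C : (Fin m → Fin n) → ℝ) (hC : ∀ v, 0 ≤ C v)
    (r : Fin m → Fin n → ℝ) (hr : ∀ k j, 0 ≤ r k j)
    (s : ℝ) (hs0 : 0 ≤ s) (hs : ∀ k, s ≤ ∑ j, r k j)
    (D : ℕ → ℝ) (hD0 : IsGreatest (Set.range C) (D 0))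
    (hDm1 : D (m - 1) = 0) (hDm : 0 < D m)
    (hconc3 : m = 3 → D 2 + D 0 - 2 * D 1 ≤ 0)
    (hconc : 4 ≤ m → ∀ i, 1 ≤ i → i ≤ m - 3 →
      D (i + 1) + D (i - 1) - 2 * D i
          ≤ ((m - 1 - i : ℕ) : ℝ) * (D (i + 2) + D i - 2 * D (i + 1)) ∧
        ((m - 1 - i : ℕ) : ℝ) * (D (i + 2) + D i - 2 * D (i + 1)) ≤ 0) :
    (∀ X ∈ PiPartial r s, ∀ Xt : (Fin m → Fin (n + 1)) → ℝ,
      (∀ v : Fin m → Fin n, Xt (emb v) = X v) →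
      (∀ (k : Fin m) (i : Fin n),
        Xt (fun ℓ => if ℓ = k then i.castSucc else Fin.last n) = r k i - marg X k i) →
      (∀ u : Fin m → Fin (n + 1), 0 < nLast u → nLast u ≠ m - 1 → Xt u = 0) →
      Xt ∈ PiEq (extMarg2 r s) ∧ dot (extCost C D) Xt = dot C X) ∧
    sInf ((fun Y => dot (extCost C D) Y) '' PiEq (extMarg2 r s))
      ≤ sInf ((fun X => dot C X) '' PiPartial r s) := by
  classical
  have hmain : ∀ X ∈ PiPartial r s, ∀ Xt : (Fin m → Fin (n + 1)) → ℝ,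
      (∀ v : Fin m → Fin n, Xt (emb v) = X v) →
      (∀ (k : Fin m) (i : Fin n),
        Xt (fun ℓ => if ℓ = k then i.castSucc else Fin.last n) = r k i - marg X k i) →
      (∀ u : Fin m → Fin (n + 1), 0 < nLast u → nLast u ≠ m - 1 → Xt u = 0) →
      Xt ∈ PiEq (extMarg2 r s) ∧ dot (extCost C D) Xt = dot C X := by
    rintro X ⟨hX0, hXm, hXs⟩ Xt hemb hspoke hzero
    have hspoke' : ∀ (k : Fin m) (i : Fin n),
        Xt (spoke k i) = r k i - marg X k i := hspoke
    -- nonnegativity of Xt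
    have hpos : ∀ u, 0 ≤ Xt u := by
      intro u
      by_cases h0 : nLast u = 0
      · obtain ⟨v, rfl⟩ := emb_of_nLast_zero h0
        rw [hemb]; exact hX0 v
      · by_cases h1 : nLast u = m - 1
        · obtain ⟨k, i, rfl⟩ := exists_spoke (by omega) h1
          rw [hspoke' k i]
          linarith [hXm k i]
        · rw [hzero u (by omega) h1]
    -- marginals of Xt
    have hmarg : ∀ k j, marg Xt k j = extMarg2 r s k j := by
      intro k j
      have hdec : marg Xt k j
          = (∑ v : Fin m → Fin n, if emb v k = j then Xt (emb v) else 0)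
            + ∑ p : Fin m × Fin n,
                if spoke p.1 p.2 k = j then Xt (spoke p.1 p.2) else 0 :=
        sum_decomp hm (fun u => if u k = j then Xt u else 0)
          (fun u h1 h2 => by
            show (if u k = j then Xt u else 0) = 0
            rw [hzero u h1 h2]; simp)
      rw [hdec]
      induction j using Fin.lastCases with
      | last =>
        have h1 : (∑ v : Fin m → Fin n,
            if emb v k = Fin.last n then Xt (emb v) else 0) = 0 :=
          Finset.sum_eq_zero fun v _ => if_neg (emb_ne_last v k)
        have h2 : (∑ p : Fin m × Fin n,
              if spoke p.1 p.2 k = Fin.last n then Xt (spoke p.1 p.2) else 0)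
            = ∑ k' ∈ univ.erase k, (∑ i, r k' i - s) := by
          rw [Fintype.sum_prod_type]
          rw [← Finset.sum_subset (Finset.subset_univ (univ.erase k)) ?_]
          · refine Finset.sum_congr rfl fun k' hk' => ?_
            have hk'' : k ≠ k' := fun h => Finset.ne_of_mem_erase hk' h.symm
            calc ∑ i, (if spoke k' i k = Fin.last n then Xt (spoke k' i) else 0)
                = ∑ i, (r k' i - marg X k' i) := by
                  refine Finset.sum_congr rfl fun i _ => ?_
                  rw [if_pos (spoke_apply_ne hk'' i), hspoke']
              _ = ∑ i, r k' i - s := by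
                  rw [Finset.sum_sub_distrib, sum_marg, hXs]
          · intro k' _ hk'
            have hkk : k' = k := by
              by_contra h
              exact hk' (Finset.mem_erase.mpr ⟨h, mem_univ _⟩)
            subst hkk
            refine Finset.sum_eq_zero fun i _ => ?_
            rw [spoke_apply_self]
            exact if_neg (Fin.castSucc_lt_last i).ne
        rw [h1, h2, zero_add, extMarg2, Fin.snoc_last, Finset.sum_sub_distrib,
          Finset.sum_const, card_erase_of_mem (mem_univ k), card_univ,
          Fintype.card_fin, nsmul_eq_mul]
        congr 2
        rw [Nat.cast_sub (by omega), Nat.cast_one]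
      | cast j0 =>
        have h1 : (∑ v : Fin m → Fin n,
              if emb v k = j0.castSucc then Xt (emb v) else 0)
            = marg X k j0 := by
          rw [marg]
          refine Finset.sum_congr rfl fun v _ => ?_
          rw [hemb]
          simp [emb, Fin.castSucc_inj]
        have h2 : (∑ p : Fin m × Fin n,
              if spoke p.1 p.2 k = j0.castSucc then Xt (spoke p.1 p.2) else 0)
            = r k j0 - marg X k j0 := by
          rw [Fintype.sum_prod_type]
          rw [Finset.sum_eq_single k]
          · rw [Finset.sum_eq_single j0]
            · rw [spoke_apply_self, if_pos rfl, hspoke']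
            · intro i _ hi
              rw [spoke_apply_self]
              exact if_neg fun h => hi (Fin.castSucc_inj.mp h)
            · intro h; exact absurd (mem_univ _) h
          · intro k' _ hk'
            refine Finset.sum_eq_zero fun i _ => ?_
            rw [spoke_apply_ne fun h => hk' h.symm]
            exact if_neg (Fin.castSucc_lt_last j0).ne'
          · intro h; exact absurd (mem_univ _) h
        rw [h1, h2, extMarg2, Fin.snoc_castSucc]
        ring
    refine ⟨⟨hpos, hmarg⟩, ?_⟩
    -- cost equality
    have hdec : dot (extCost C D) Xt
        = (∑ v : Fin m → Fin n, extCost C D (emb v) * Xt (emb v))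
          + ∑ p : Fin m × Fin n,
              extCost C D (spoke p.1 p.2) * Xt (spoke p.1 p.2) :=
      sum_decomp hm (fun u => extCost C D u * Xt u)
        (fun u h1 h2 => by
          show extCost C D u * Xt u = 0
          rw [hzero u h1 h2, mul_zero])
    have h2 : (∑ p : Fin m × Fin n,
          extCost C D (spoke p.1 p.2) * Xt (spoke p.1 p.2)) = 0 :=
      Finset.sum_eq_zero fun p _ => by
        rw [extCost_spoke (by omega), hDm1, zero_mul]
    rw [hdec, h2, add_zero, dot]
    refine Finset.sum_congr rfl fun v _ => ?_
    rw [extCost_emb, hemb]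
  refine ⟨hmain, ?_⟩
  -- the partial polytope is nonempty
  obtain ⟨X₀, hX₀⟩ : ∃ X₀, X₀ ∈ PiPartial r s := by
    rcases eq_or_lt_of_le hs0 with h0 | h0
    · refine ⟨fun _ => 0, fun v => le_refl 0, fun k j => ?_, ?_⟩
      · have hz : marg (fun _ : Fin m → Fin n => (0 : ℝ)) k j = 0 := by
          simp [marg]
        rw [hz]; exact hr k j
      · simp [← h0]
    · have hR : ∀ k, 0 < ∑ j, r k j := fun k => lt_of_lt_of_le h0 (hs k)
      set f : Fin m → Fin n → ℝ := fun k i => r k i / (∑ j, r k j) with hf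
      have hfsum : ∀ k, ∑ i, f k i = 1 := fun k => by
        rw [hf]
        simp only
        rw [← Finset.sum_div, div_self (ne_of_gt (hR k))]
      have hfnn : ∀ k i, 0 ≤ f k i := fun k i =>
        div_nonneg (hr k i) (le_of_lt (hR k))
      refine ⟨fun v => s * ∏ ℓ, f ℓ (v ℓ),
        fun v => mul_nonneg hs0 (Finset.prod_nonneg fun ℓ _ => hfnn _ _), ?_, ?_⟩
      · intro k j
        have hms : marg (fun v => s * ∏ ℓ, f ℓ (v ℓ)) k j
            = s * marg (fun v => ∏ ℓ, f ℓ (v ℓ)) k j := by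
          rw [marg, marg, Finset.mul_sum]
          refine Finset.sum_congr rfl fun v _ => ?_
          by_cases hv : v k = j
          · rw [if_pos hv, if_pos hv]
          · rw [if_neg hv, if_neg hv, mul_zero]
        rw [hms, marg_prod]
        have herase : (∏ ℓ ∈ univ.erase k, ∑ i, f ℓ i) = 1 := by
          rw [Finset.prod_congr rfl fun ℓ _ => hfsum ℓ, Finset.prod_const_one]
        rw [herase, mul_one]
        have hfj : f k j = r k j / (∑ j', r k j') := rfl
        rw [hfj]
        calc s * (r k j / (∑ j', r k j')) = r k j * (s / (∑ j', r k j')) := by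
              ring
          _ ≤ r k j * 1 :=
              mul_le_mul_of_nonneg_left ((div_le_one (hR k)).mpr (hs k)) (hr k j)
          _ = r k j := mul_one _
      · rw [← Finset.mul_sum, sum_prod_eq,
          Finset.prod_congr rfl fun ℓ _ => hfsum ℓ, Finset.prod_const_one,
          mul_one]
  have hBA : ((fun X => dot C X) '' PiPartial r s)
      ⊆ ((fun Y => dot (extCost C D) Y) '' PiEq (extMarg2 r s)) := by
    rintro y ⟨X, hX, rfl⟩
    obtain ⟨hmem, hdot⟩ := hmain X hX (extTensor r X) (extTensor_emb hm r X)
      (fun k i => extTensor_spoke hm r X k i) (extTensor_zero hm r X)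
    exact ⟨extTensor r X, hmem, hdot⟩
  have hBne : ((fun X => dot C X) '' PiPartial r s).Nonempty :=
    ⟨dot C X₀, X₀, hX₀, rfl⟩
  by_cases hbdd : BddBelow ((fun Y => dot (extCost C D) Y) '' PiEq (extMarg2 r s))
  · exact csInf_le_csInf hbdd hBne hBA
  · rw [Real.sInf_of_not_bddBelow hbdd]
    apply Real.sInf_nonneg
    rintro y ⟨X, hX, rfl⟩
    exact Finset.sum_nonneg fun v _ => mul_nonneg (hC v) (hX.1 v)
end
end

section
/- Let C̄ and extended marginals r̄_1,…,r̄_m be given by either the first or the second equivalent form, so that min_{X ∈ Π^s(r_1,…,r_m)} ⟨C, X⟩ = min_{X̄ ∈ Π(r̄_1,…,r̄_m)} ⟨C̄, X̄⟩. Let ε > 0 and let X̄ ∈ Π(r̄_1,…,r̄_m) satisfy ⟨C̄, X̄⟩ ≤ min_{Ȳ ∈ Π(r̄_1,…,r̄_m)} ⟨C̄, Ȳ⟩ + ε. Then the restriction X := X̄_{[n]^m} is an ε-approximated multimarginal partial transportation plan: c_k(X) ≤ r_k entrywise for all k ∈ [m], and ⟨C, X⟩ ≤ ⟨C, X*⟩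 + ε where X* is any optimal solution of min over Π^s(r_1,…,r_m) of ⟨C, ·⟩. -/
open Finset

noncomputable section

open MPOT

/-- Proposition 3.3 / ε-approximation transfer: if the extended cost `Cb`
is nonnegative, agrees with `C` on `[n]^m`, the extended marginals `rb` agree with the
`r_k` on their first `n` entries, and the optimal values of the partial problem and the
extended problem coincide, then the restriction to `[n]^m` of any `ε`-optimal plan for
the extended problem is an `ε`-approximated multimarginal partial transportation plan. -/
theorem approx_mpot_transfer {m n : ℕ} (hm : 2 ≤ m) (hn : 1 ≤ n)
    (C : (Fin m → Fin n) → ℝ) (hC : ∀ v, 0 ≤ C v)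
    (r : Fin m → Fin n → ℝ) (hr : ∀ k j, 0 ≤ r k j)
    (s : ℝ) (hs0 : 0 ≤ s) (hs : ∀ k, s ≤ ∑ j, r k j)
    (Cb : (Fin m → Fin (n + 1)) → ℝ) (hCb0 : ∀ u, 0 ≤ Cb u)
    (hagree : ∀ v : Fin m → Fin n, Cb (emb v) = C v)
    (rb : Fin m → Fin (n + 1) → ℝ)
    (hrb : ∀ (k : Fin m) (j : Fin n), rb k j.castSucc = r k j)
    (heq : sInf ((fun X => dot C X) '' PiPartial r s)
      = sInf ((fun Y => dot Cb Y) '' PiEq rb))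
    (ε : ℝ) (hε : 0 < ε)
    (Xb : (Fin m → Fin (n + 1)) → ℝ) (hXb : Xb ∈ PiEq rb)
    (hXbε : dot Cb Xb ≤ sInf ((fun Y => dot Cb Y) '' PiEq rb) + ε)
    (Xstar : (Fin m → Fin n) → ℝ) (hstar : Xstar ∈ PiPartial r s)
    (hstaropt : ∀ Y ∈ PiPartial r s, dot C Xstar ≤ dot C Y) :
    (∀ k j, marg (restr Xb) k j ≤ r k j) ∧
      dot C (restr Xb) ≤ dot C Xstar + ε := by
  obtain ⟨hXb0, hXbm⟩ := hXb
  have hinj : Function.Injective (emb (m := m) (n := n)) := by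
    intro v w h
    funext i
    have := congrFun h i
    simpa [emb, Fin.castSucc_inj] using this
  constructor
  · intro k j
    have h1 : marg (restr Xb) k j ≤ marg Xb k (j.castSucc) := by
      unfold marg restr
      have himg := Finset.sum_image (s := (univ : Finset (Fin m → Fin n)))
        (g := emb) (f := fun u => if u k = j.castSucc then Xb u else 0)
        (fun x _ y _ h => hinj h)
      calc ∑ v : Fin m → Fin n, (if v k = j then Xb (emb v) else 0)
          = ∑ u ∈ (univ : Finset (Fin m → Fin n)).image emb,
              (if u k = j.castSucc then Xb u else 0) := by
            rw [himg]
            refine Finset.sum_congr rfl fun v _ => ?_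
            simp [emb, Fin.castSucc_inj]
        _ ≤ ∑ u : Fin m → Fin (n + 1), (if u k = j.castSucc then Xb u else 0) := by
            refine Finset.sum_le_sum_of_subset_of_nonneg (Finset.subset_univ _)
              fun u _ _ => ?_
            split
            · exact hXb0 u
            · exact le_rfl
    calc marg (restr Xb) k j ≤ marg Xb k (j.castSucc) := h1
      _ = rb k (j.castSucc) := hXbm k _
      _ = r k j := hrb k j
  · have hdot : dot C (restr Xb) ≤ dot Cb Xb := by
      unfold dot restr
      have himg := Finset.sum_image (s := (univ : Finset (Fin m → Fin n)))
        (g := emb) (f := fun u => Cb u * Xb u) (fun x _ y _ h => hinj h)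
      calc ∑ v : Fin m → Fin n, C v * Xb (emb v)
          = ∑ u ∈ (univ : Finset (Fin m → Fin n)).image emb, Cb u * Xb u := by
            rw [himg]
            exact Finset.sum_congr rfl fun v _ => by rw [hagree]
        _ ≤ ∑ u : Fin m → Fin (n + 1), Cb u * Xb u :=
            Finset.sum_le_sum_of_subset_of_nonneg (Finset.subset_univ _)
              fun u _ _ => mul_nonneg (hCb0 u) (hXb0 u)
    have hbdd : BddBelow ((fun X => dot C X) '' PiPartial r s) := by
      refine ⟨0, fun x hx => ?_⟩
      obtain ⟨X, hX, rfl⟩ := hx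
      exact Finset.sum_nonneg fun v _ => mul_nonneg (hC v) (hX.1 v)
    have hinf : sInf ((fun X => dot C X) '' PiPartial r s) ≤ dot C Xstar :=
      csInf_le hbdd ⟨Xstar, hstar, rfl⟩
    calc dot C (restr Xb) ≤ dot Cb Xb := hdot
      _ ≤ sInf ((fun Y => dot Cb Y) '' PiEq rb) + ε := hXbε
      _ = sInf ((fun X => dot C X) '' PiPartial r s) + ε := by rw [heq]
      _ ≤ dot C Xstar + ε := by linarith
end
end
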